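/- arXiv:1406.1451 — 5 statements merged into one kernel-verified Lean document; each statement's English description precedes it below -/
import Mathlib

section
/- Let a, b, c, d ∈ ℂ with a d − b c ≠ 0, and suppose that (a t + b)/(c t + d) is real for every real t with c t + d ≠ 0. Then a·conj(c) ∈ ℝ, b·conj(d) ∈ ℝ, and b·conj(c) + a·conj(d) ∈ ℝ. -/
open Complex

/-- If a Möbius transformation `φ(t) = (a t + b)/(c t + d)` with complex coefficients and
`a d − b c ≠ 0` maps real numbers to real numbers wherever it is defined, then
`a·conj(c)`, `b·conj(d)` and `b·conj(c) + a·conj(d)` are real. -/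
theorem moebius_real_products (a b c d : ℂ) (h : a * d - b * c ≠ 0)
    (h1 : ∀ t : ℝ, c * t + d ≠ 0 → ((a * t + b) / (c * t + d)).im = 0) :
    (a * (starRingEnd ℂ) c).im = 0 ∧ (b * (starRingEnd ℂ) d).im = 0 ∧
      (b * (starRingEnd ℂ) c + a * (starRingEnd ℂ) d).im = 0 := by
  set A := (a * (starRingEnd ℂ) c).im with hA'
  set B := (b * (starRingEnd ℂ) c + a * (starRingEnd ℂ) d).im with hB'
  set C := (b * (starRingEnd ℂ) d).im with hC'
  -- key: the quadratic vanishes at every good t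
  have key : ∀ t : ℝ, c * t + d ≠ 0 → A * t ^ 2 + B * t + C = 0 := by
    intro t ht
    have h2 := h1 t ht
    have hprod : ((a * t + b) * (starRingEnd ℂ) (c * t + d)).im = 0 := by
      have : (a * t + b) * (starRingEnd ℂ) (c * t + d)
          = ((a * t + b) / (c * t + d)) * ((Complex.normSq (c * t + d) : ℝ) : ℂ) := by
        rw [div_mul_eq_mul_div, eq_div_iff ht]
        rw [mul_assoc, mul_comm ((starRingEnd ℂ) (c * ↑t + d)), Complex.mul_conj]
      rw [this, Complex.mul_im, h2, Complex.ofReal_im, Complex.ofReal_re]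
      ring
    have hexp : (a * t + b) * (starRingEnd ℂ) (c * t + d)
        = (a * (starRingEnd ℂ) c) * (t : ℂ) ^ 2
          + (b * (starRingEnd ℂ) c + a * (starRingEnd ℂ) d) * t
          + b * (starRingEnd ℂ) d := by
      rw [map_add, map_mul, Complex.conj_ofReal]
      ring
    rw [hexp] at hprod
    simpa [Complex.add_im, Complex.mul_im, ← Complex.ofReal_pow, hA', hB', hC']
      using hprod
  -- there is at most one bad real point
  obtain ⟨x, hx⟩ : ∃ x : ℝ, ∀ t : ℝ, t ≠ x → c * t + d ≠ 0 := by
    by_cases hc : c = 0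
    · refine ⟨0, fun t _ ht => ?_⟩
      have hd : d ≠ 0 := by
        intro hd
        apply h
        rw [hc, hd]; ring
      apply hd
      simpa [hc] using ht
    · refine ⟨(-d / c).re, fun t htx ht => ?_⟩
      have : (t : ℂ) = -d / c := by
        field_simp at ht ⊢
        linear_combination ht
      apply htx
      have := congrArg Complex.re this
      simpa using this
  have e1 := key (x + 1) (hx _ (by intro hh; linarith [congrArg id hh]))
  have e2 := key (x + 2) (hx _ (by intro hh; linarith [congrArg id hh]))
  have e3 := key (x + 3) (hx _ (by intro hh; linarith [congrArg id hh]))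
  have hA : A = 0 := by linear_combination (e1 - 2 * e2 + e3) / 2
  have hB : B = 0 := by linear_combination e2 - e1 - (2 * x + 3) * hA
  have hC : C = 0 := by linear_combination e1 - (x + 1) ^ 2 * hA - (x + 1) * hB
  exact ⟨hA, hC, hB⟩
end

section
/- Let a, b, c, d ∈ ℝ with a d − b c ≠ 0, let F(t, s) = (c t + d)s − (a t + b) ∈ ℝ[t, s], and let K ∈ ℝ[t, s] be a bivariate polynomial such that K(t, (a t + b)/(c t + d)) = 0 for every real t with c t + d ≠ 0. Then F divides K in ℝ[t, s]. -/
open MvPolynomial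

/-- The algebra equivalence `ℝ[t,s] ≃ (ℝ[t])[s]`, sending `X 1` (the `s`-variable)
to the outer `Polynomial.X` and `X 0` (the `t`-variable) to `C X`. -/
noncomputable def myMoebE : MvPolynomial (Fin 2) ℝ ≃ₐ[ℝ] Polynomial (Polynomial ℝ) :=
  (MvPolynomial.renameEquiv ℝ (Equiv.swap (0 : Fin 2) 1)).trans
    ((MvPolynomial.finSuccEquiv ℝ 1).trans
      (Polynomial.mapAlgEquiv
        ((MvPolynomial.finSuccEquiv ℝ 0).trans
          (Polynomial.mapAlgEquiv (MvPolynomial.isEmptyAlgEquiv ℝ (Fin 0))))))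

lemma myMoebE_C (r : ℝ) : myMoebE (C r) = Polynomial.C (Polynomial.C r) := by
  have h1 : (C r : MvPolynomial (Fin 2) ℝ) = algebraMap ℝ _ r := rfl
  rw [h1, AlgEquiv.commutes]
  simp [Polynomial.algebraMap_apply, MvPolynomial.algebraMap_eq]

lemma myMoebE_X0 : myMoebE (X 0) = Polynomial.C Polynomial.X := by
  have h1 : (Equiv.swap (0 : Fin 2) 1) 0 = 1 := by decide
  have h2 : (1 : Fin 2) = Fin.succ 0 := rfl
  rw [myMoebE, AlgEquiv.trans_apply, AlgEquiv.trans_apply, MvPolynomial.renameEquiv_apply,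
    rename_X, h1, h2, MvPolynomial.finSuccEquiv_X_succ, Polynomial.coe_mapAlgEquiv,
    Polynomial.map_C]
  congr 1
  simp [AlgEquiv.trans_apply, MvPolynomial.finSuccEquiv_X_zero, Polynomial.coe_mapAlgEquiv]

lemma myMoebE_X1 : myMoebE (X 1) = Polynomial.X := by
  have h1 : (Equiv.swap (0 : Fin 2) 1) 1 = 0 := by decide
  rw [myMoebE, AlgEquiv.trans_apply, AlgEquiv.trans_apply, MvPolynomial.renameEquiv_apply,
    rename_X, h1, MvPolynomial.finSuccEquiv_X_zero, Polynomial.coe_mapAlgEquiv,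
    Polynomial.map_X]

lemma myMoebE_eval (K : MvPolynomial (Fin 2) ℝ) (t s : ℝ) :
    eval ![t, s] K = Polynomial.eval₂ (Polynomial.evalRingHom t) s (myMoebE K) := by
  have key : (eval ![t, s] : MvPolynomial (Fin 2) ℝ →+* ℝ)
      = (Polynomial.eval₂RingHom (Polynomial.evalRingHom t) s).comp
          (myMoebE : MvPolynomial (Fin 2) ℝ ≃+* Polynomial (Polynomial ℝ)).toRingHom := by
    apply MvPolynomial.ringHom_ext
    · intro r
      simp [myMoebE_C]
    · intro i
      fin_cases i
      · simp [myMoebE_X0]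
      · simp [myMoebE_X1]
  exact DFunLike.congr_fun key K

/-- Let `a, b, c, d ∈ ℝ` with `a d − b c ≠ 0`, let `F(t, s) = (c t + d)s − (a t + b)`
(with `t = X 0`, `s = X 1`), and let `K ∈ ℝ[t, s]` vanish on the graph of the Möbius
transformation `φ(t) = (a t + b)/(c t + d)`, i.e. `K(t, φ(t)) = 0` for every real `t`
with `c t + d ≠ 0`. Then `F` divides `K` in `ℝ[t, s]`. -/
theorem moebiusLike_dvd_of_vanishing (a b c d : ℝ) (h : a * d - b * c ≠ 0)
    (K : MvPolynomial (Fin 2) ℝ)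
    (hK : ∀ t : ℝ, c * t + d ≠ 0 →
      eval ![t, (a * t + b) / (c * t + d)] K = 0) :
    ((C c * X 0 + C d) * X 1 - (C a * X 0 + C b) : MvPolynomial (Fin 2) ℝ) ∣ K := by
  classical
  by_cases hK0 : K = 0
  · simp [hK0]
  set p : Polynomial ℝ := Polynomial.C c * Polynomial.X + Polynomial.C d with hpdef
  set q : Polynomial ℝ := Polynomial.C a * Polynomial.X + Polynomial.C b with hqdef
  set F' : Polynomial (Polynomial ℝ) := Polynomial.C p * Polynomial.X - Polynomial.C q
    with hF'def
  have hF : myMoebE ((C c * X 0 + C d) * X 1 - (C a * X 0 + C b)) = F' := by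
    simp only [map_sub, map_add, map_mul, myMoebE_C, myMoebE_X0, myMoebE_X1, hF'def,
      hpdef, hqdef, map_add, map_mul]
  have hpeval : ∀ t : ℝ, Polynomial.eval t p = c * t + d := by
    intro t; simp [hpdef]
  have hqeval : ∀ t : ℝ, Polynomial.eval t q = a * t + b := by
    intro t; simp [hqdef]
  have hpne : p ≠ 0 := by
    intro h0
    have hd : d = 0 := by
      have := congrArg (Polynomial.eval 0) h0
      simpa [hpeval] using this
    have hc : c = 0 := by
      have := congrArg (Polynomial.eval 1) h0
      simp [hpeval, hd] at this
      exact this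
    apply h; rw [hc, hd]; ring
  set K' : Polynomial (Polynomial ℝ) := myMoebE K with hK'def
  set n : ℕ := K'.natDegree with hndef
  set G : Polynomial ℝ :=
    ∑ i ∈ Finset.range (n + 1), K'.coeff i * q ^ i * p ^ (n - i) with hGdef
  -- G vanishes at every t with p t ≠ 0
  have hGzero : G = 0 := by
    apply Polynomial.eq_zero_of_infinite_isRoot
    have hsub : {t : ℝ | ¬ p.IsRoot t} ⊆ {x | G.IsRoot x} := by
      intro t ht
      have hpt : Polynomial.eval t p ≠ 0 := ht
      have hct : c * t + d ≠ 0 := by rw [← hpeval t]; exact hpt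
      have h1 := hK t hct
      rw [myMoebE_eval, Polynomial.eval₂_eq_sum_range] at h1
      have h2 : Polynomial.eval t G =
          (Polynomial.eval t p) ^ n * ∑ i ∈ Finset.range (n + 1),
            (Polynomial.evalRingHom t) (K'.coeff i) * ((a * t + b) / (c * t + d)) ^ i := by
        rw [Finset.mul_sum, hGdef, Polynomial.eval_finset_sum]
        apply Finset.sum_congr rfl
        intro i hi
        have hi' : i ≤ n := Nat.lt_succ_iff.mp (Finset.mem_range.mp hi)
        have hpow : (Polynomial.eval t p) ^ n
            = (Polynomial.eval t p) ^ (n - i) * (Polynomial.eval t p) ^ i :=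
          (pow_sub_mul_pow _ hi').symm
        rw [Polynomial.eval_mul, Polynomial.eval_mul, Polynomial.eval_pow,
          Polynomial.eval_pow, ← hpeval t, ← hqeval t, div_pow, hpow,
          Polynomial.coe_evalRingHom]
        field_simp
      rw [← hK'def, ← hndef] at h1
      show Polynomial.eval t G = 0
      rw [h2, h1, mul_zero]
    exact Set.Infinite.mono hsub
      ((Polynomial.finite_setOf_isRoot hpne).infinite_compl)
  -- move to the fraction field RatFunc ℝ
  set A : Polynomial ℝ →+* RatFunc ℝ := algebraMap (Polynomial ℝ) (RatFunc ℝ) with hAdef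
  have hAinj : Function.Injective A := IsFractionRing.injective _ _
  have hpA : A p ≠ 0 := fun h0 => hpne (hAinj (by simpa using h0))
  set z : RatFunc ℝ := A q / A p with hzdef
  have hroot : Polynomial.eval z (K'.map A) = 0 := by
    have hmain : (A p) ^ n * Polynomial.eval z (K'.map A) = 0 := by
      rw [Polynomial.eval_map, Polynomial.eval₂_eq_sum_range, ← hndef, Finset.mul_sum]
      have : ∀ i ∈ Finset.range (n + 1),
          (A p) ^ n * (A (K'.coeff i) * z ^ i)
            = A (K'.coeff i * q ^ i * p ^ (n - i)) := by
        intro i hi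
        have hi' : i ≤ n := Nat.lt_succ_iff.mp (Finset.mem_range.mp hi)
        have hpow : (A p) ^ n = (A p) ^ (n - i) * (A p) ^ i :=
          (pow_sub_mul_pow _ hi').symm
        rw [map_mul, map_mul, map_pow, map_pow, hzdef, div_pow, hpow]
        field_simp
      rw [Finset.sum_congr rfl this, ← map_sum]
      rw [← hGdef, hGzero, map_zero]
    rcases mul_eq_zero.mp hmain with h0 | h0
    · exact absurd h0 (pow_ne_zero _ hpA)
    · exact h0
  -- F' maps to a unit multiple of X - C z, which divides K'.map A
  have hFfactor : F'.map A = Polynomial.C (A p) * (Polynomial.X - Polynomial.C z) := by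
    rw [hF'def]
    rw [Polynomial.map_sub, Polynomial.map_mul, Polynomial.map_C, Polynomial.map_C,
      Polynomial.map_X, mul_sub, ← Polynomial.C_mul, hzdef,
      mul_div_cancel₀ _ hpA]
  have hmapdvdK : F'.map A ∣ K'.map A := by
    rw [hFfactor]
    have h1 : (Polynomial.X - Polynomial.C z) ∣ K'.map A :=
      Polynomial.dvd_iff_isRoot.mpr hroot
    have hu : IsUnit (Polynomial.C (A p) : Polynomial (RatFunc ℝ)) :=
      Polynomial.isUnit_C.mpr hpA.isUnit
    rcases hu with ⟨u, hu⟩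
    rw [← hu, mul_comm, Units.mul_right_dvd]
    exact h1
  -- primitivity of F'
  have hFprim : F'.IsPrimitive := by
    intro r hr
    rw [Polynomial.C_dvd_iff_dvd_coeff] at hr
    have h1 : r ∣ p := by
      have := hr 1
      simpa [hF'def] using this
    have h0 : r ∣ q := by
      have := hr 0
      simp [hF'def] at this
      exact this
    have hdvd : r ∣ Polynomial.C (a * d - b * c) := by
      have heq : Polynomial.C (a * d - b * c)
          = Polynomial.C a * p - Polynomial.C c * q := by
        rw [hpdef, hqdef, map_sub, map_mul, map_mul]
        ring
      rw [heq]
      exact dvd_sub (h1.mul_left _) (h0.mul_left _)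
    exact isUnit_of_dvd_unit hdvd (Polynomial.isUnit_C.mpr (Ne.isUnit h))
  -- Gauss's lemma: F' divides K'
  have hK'ne : K' ≠ 0 := fun h0 => hK0 (by
    have := congrArg myMoebE.symm h0
    simpa [hK'def] using this)
  have hcont : K'.content ≠ 0 := fun h0 => hK'ne (Polynomial.content_eq_zero_iff.mp h0)
  have hmapdvdPrim : F'.map A ∣ (K'.primPart).map A := by
    have hKfac : K' = Polynomial.C K'.content * K'.primPart :=
      K'.eq_C_content_mul_primPart
    have hu : IsUnit (Polynomial.C (A K'.content) : Polynomial (RatFunc ℝ)) :=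
      Polynomial.isUnit_C.mpr (Ne.isUnit fun h0 => hcont (hAinj (by simpa using h0)))
    have : K'.map A = Polynomial.C (A K'.content) * (K'.primPart).map A := by
      conv_lhs => rw [hKfac]
      rw [Polynomial.map_mul, Polynomial.map_C]
    rw [this] at hmapdvdK
    exact hu.dvd_mul_left.mp hmapdvdK
  have hFdvdK' : F' ∣ K' := by
    have := hFprim.dvd_of_fraction_map_dvd_fraction_map
      (K := RatFunc ℝ) hmapdvdPrim
    exact this.trans K'.primPart_dvd
  -- transport back through the equivalence
  obtain ⟨w, hw⟩ := hFdvdK'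
  refine ⟨myMoebE.symm w, myMoebE.injective ?_⟩
  rw [map_mul, hF, AlgEquiv.apply_symm_apply]
  exact hw
end

section
/- Let a, b, c, d ∈ ℝ with a d − b c ≠ 0, let F(t, s) = (c t + d)s − (a t + b) ∈ ℝ[t, s], and let G ∈ ℝ[t, s] be a nonzero bivariate polynomial written as G(t, s) = Σ_{k=0}^{n} G_k(t) s^k with n the degree of G in s. Then F divides G in ℝ[t, s] if and only if the univariate polynomial Σ_{k=0}^{n} G_k(t) (a t + b)^k (c t + d)^{n−k} is identically zero. -/
open Polynomial

/-- Let `a, b, c, d ∈ ℝ` with `a d − b c ≠ 0`, and let `F(t, s) = (c t + d)s − (a t + b)`.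
A nonzero bivariate polynomial `G(t, s) = Σ_{k=0}^{n} G_k(t) s^k` (here an element of
`ℝ[t][s]`, with `n` the degree of `G` in `s` and `G_k = G.coeff k ∈ ℝ[t]`) is divisible by
`F` if and only if the univariate polynomial
`Σ_{k=0}^{n} G_k(t) (a t + b)^k (c t + d)^{n−k}` is identically zero. -/
theorem moebiusLike_dvd_iff_sum_eq_zero (a b c d : ℝ) (h : a * d - b * c ≠ 0)
    (G : Polynomial (Polynomial ℝ)) (hG : G ≠ 0) :
    (Polynomial.C (C c * X + C d) * X - Polynomial.C (C a * X + C b) : Polynomial (Polynomial ℝ)) ∣ G ↔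
      ∑ k ∈ Finset.range (G.natDegree + 1),
        G.coeff k * (C a * X + C b) ^ k * (C c * X + C d) ^ (G.natDegree - k) = 0 := by
  classical
  set p : Polynomial ℝ := C a * X + C b with hp_def
  set q : Polynomial ℝ := C c * X + C d with hq_def
  set F : Polynomial (Polynomial ℝ) := Polynomial.C q * X - Polynomial.C p with hF_def
  set n := G.natDegree with hn_def
  -- q ≠ 0
  have hq0 : q ≠ 0 := by
    intro hq
    have hc : c = 0 := by
      have := congrArg (fun f => f.coeff 1) hq
      simpa [hq_def, coeff_one] using this
    have hd : d = 0 := by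
      have := congrArg (fun f => f.coeff 0) hq
      simpa [hq_def] using this
    apply h; rw [hc, hd]; ring
  -- coprimality witness: c • p - a • q is a nonzero constant
  have hconst : C c * p - C a * q = C (c * b - a * d) := by
    rw [hp_def, hq_def, C_sub, C_mul, C_mul]
    ring
  -- F is primitive
  have hFprim : F.IsPrimitive := by
    intro r hr
    rw [C_dvd_iff_dvd_coeff] at hr
    have h0 : r ∣ p := by
      have h' := hr 0
      simp [hF_def] at h'
      exact h'
    have h1 : r ∣ q := by
      have h' := hr 1
      simpa [hF_def] using h'
    have hdvd : r ∣ C (c * b - a * d) := by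
      rw [← hconst]
      exact dvd_sub (h0.mul_left _) (h1.mul_left _)
    have hcbad : c * b - a * d ≠ 0 := by
      intro h'; apply h; linarith
    exact isUnit_of_dvd_unit hdvd (isUnit_C.mpr (isUnit_iff_ne_zero.mpr hcbad))
  -- fraction field
  set K := FractionRing (Polynomial ℝ)
  set φ : Polynomial ℝ →+* K := algebraMap (Polynomial ℝ) K with hφ_def
  have hφinj : Function.Injective φ := IsFractionRing.injective _ _
  have hφq : φ q ≠ 0 := fun h' => hq0 (hφinj (by simpa using h'))
  -- Step A : F ∣ G ↔ F.map φ ∣ G.map φ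
  have stepA : F ∣ G ↔ F.map φ ∣ G.map φ := by
    constructor
    · exact fun hd => Polynomial.map_dvd φ hd
    · intro hd
      have hcont : G.content ≠ 0 := fun h' => hG (content_eq_zero_iff.mp h')
      have hu : IsUnit (Polynomial.C (φ G.content) : Polynomial K) :=
        isUnit_C.mpr (isUnit_iff_ne_zero.mpr (fun h' => hcont (hφinj (by simpa using h'))))
      have hGdecomp : G.map φ = Polynomial.C (φ G.content) * G.primPart.map φ := by
        conv_lhs => rw [G.eq_C_content_mul_primPart]
        rw [Polynomial.map_mul, map_C]
      rw [hGdecomp, hu.dvd_mul_left] at hd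
      exact (hFprim.dvd_of_fraction_map_dvd_fraction_map hd).trans
        G.primPart_dvd
  -- Step B
  have huq : IsUnit (Polynomial.C (φ q) : Polynomial K) :=
    isUnit_C.mpr (isUnit_iff_ne_zero.mpr hφq)
  set r : K := φ p / φ q with hr_def
  have hqr : φ q * r = φ p := by
    rw [hr_def, mul_div_assoc', mul_comm, mul_div_assoc, div_self hφq, mul_one]
  have hFmap : F.map φ = Polynomial.C (φ q) * (X - Polynomial.C r) := by
    rw [hF_def, Polynomial.map_sub, Polynomial.map_mul, map_C, map_C, Polynomial.map_X,
      mul_sub, ← C_mul, hqr]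
  have stepB : F.map φ ∣ G.map φ ↔ (G.map φ).eval r = 0 := by
    rw [hFmap, huq.mul_left_dvd, dvd_iff_isRoot, IsRoot.def]
  -- Step C
  have heval : (G.map φ).eval r = ∑ k ∈ Finset.range (n + 1), φ (G.coeff k) * r ^ k := by
    rw [eval_eq_sum_range' (lt_of_le_of_lt natDegree_map_le (Nat.lt_succ_self n))]
    exact Finset.sum_congr rfl fun k _ => by rw [coeff_map]
  have hkey : φ (∑ k ∈ Finset.range (n + 1), G.coeff k * p ^ k * q ^ (n - k))
      = φ q ^ n * (G.map φ).eval r := by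
    rw [heval, Finset.mul_sum, map_sum]
    refine Finset.sum_congr rfl fun k hk => ?_
    have hk' : k ≤ n := Nat.lt_succ_iff.mp (Finset.mem_range.mp hk)
    rw [map_mul, map_mul, map_pow, map_pow, hr_def, div_pow, pow_sub₀ _ hφq hk']
    ring
  rw [stepA, stepB]
  constructor
  · intro he
    apply hφinj
    rw [hkey, he, mul_zero, map_zero]
  · intro hs
    have h0 := congrArg φ hs
    rw [hkey, map_zero] at h0
    exact (mul_eq_zero.mp h0).resolve_left (pow_ne_zero n hφq)
end

section
/- Let x : ℝ → ℝ³, let Q ∈ ℝ^{3×3} be an orthogonal matrix, let b ∈ ℝ³, and let φ : ℝ → ℝ. Suppose x is three times differentiable at t and at φ(t), φ is three times differentiable at t with φ'(t) ≠ 0, and Q x(u) + b = x(φ(u)) for all u in some neighborhood of t. Then κ_x(φ(t)) = κ_x(t) and τ_x(φ(t)) = det(Q) · τ_x(t). -/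
open Matrix Filter Topology

/-- The Euclidean norm on `ℝ³ = Fin 3 → ℝ`. -/
noncomputable def eNorm (v : Fin 3 → ℝ) : ℝ := Real.sqrt (∑ i, v i ^ 2)

/-- The Euclidean inner product on `ℝ³ = Fin 3 → ℝ`. -/
def eInner (u v : Fin 3 → ℝ) : ℝ := ∑ i, u i * v i

/-- The curvature `κ_x(t) = ‖x'(t) × x''(t)‖ / ‖x'(t)‖³` of a parametric curve `x` at `t`
(with the Lean convention that division by zero yields zero). -/
noncomputable def curvature (x : ℝ → Fin 3 → ℝ) (t : ℝ) : ℝ :=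
  eNorm ((deriv x t) ⨯₃ (deriv (deriv x) t)) / eNorm (deriv x t) ^ 3

/-- The torsion `τ_x(t) = ⟪x'(t) × x''(t), x'''(t)⟫ / ‖x'(t) × x''(t)‖²` of a parametric
curve `x` at `t` (with the Lean convention that division by zero yields zero). -/
noncomputable def torsion (x : ℝ → Fin 3 → ℝ) (t : ℝ) : ℝ :=
  eInner ((deriv x t) ⨯₃ (deriv (deriv x) t)) (deriv (deriv (deriv x)) t) /
    eNorm ((deriv x t) ⨯₃ (deriv (deriv x) t)) ^ 2

/-- A map from `ℝ` to a normed space is three times differentiable at `t` if it is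
differentiable in a neighborhood of `t`, its derivative is differentiable in a
neighborhood of `t`, and its second derivative is differentiable at `t`. -/
def ThreeTimesDiffAt {E : Type*} [NormedAddCommGroup E] [NormedSpace ℝ E]
    (f : ℝ → E) (t : ℝ) : Prop :=
  (∀ᶠ u in 𝓝 t, DifferentiableAt ℝ f u) ∧
  (∀ᶠ u in 𝓝 t, DifferentiableAt ℝ (deriv f) u) ∧
  DifferentiableAt ℝ (deriv (deriv f)) t

lemma eInner_self_nonneg (v : Fin 3 → ℝ) : 0 ≤ eInner v v :=
  Finset.sum_nonneg fun i _ => mul_self_nonneg _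

lemma eNorm_eq (v : Fin 3 → ℝ) : eNorm v = Real.sqrt (eInner v v) := by
  unfold eNorm eInner; congr 1; exact Finset.sum_congr rfl fun i _ => sq (v i)

lemma eNorm_sq (v : Fin 3 → ℝ) : eNorm v ^ 2 = eInner v v := by
  rw [eNorm_eq]; exact Real.sq_sqrt (eInner_self_nonneg v)

lemma innQ (Q : Matrix (Fin 3) (Fin 3) ℝ) (hQ : Qᵀ * Q = 1) (u v : Fin 3 → ℝ) :
    eInner (Q *ᵥ u) (Q *ᵥ v) = eInner u v := by
  have h00 := congrFun (congrFun hQ 0) 0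
  have h01 := congrFun (congrFun hQ 0) 1
  have h02 := congrFun (congrFun hQ 0) 2
  have h11 := congrFun (congrFun hQ 1) 1
  have h12 := congrFun (congrFun hQ 1) 2
  have h22 := congrFun (congrFun hQ 2) 2
  simp [Matrix.mul_apply, Fin.sum_univ_three, Matrix.one_apply] at h00 h01 h02 h11 h12 h22
  simp [eInner, Matrix.mulVec, dotProduct, Fin.sum_univ_three]
  linear_combination (u 0 * v 0) * h00 + (u 0 * v 1 + u 1 * v 0) * h01 +
    (u 0 * v 2 + u 2 * v 0) * h02 + (u 1 * v 1) * h11 +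
    (u 1 * v 2 + u 2 * v 1) * h12 + (u 2 * v 2) * h22

lemma tripleQ (Q : Matrix (Fin 3) (Fin 3) ℝ) (u v w : Fin 3 → ℝ) :
    eInner ((Q *ᵥ u) ⨯₃ (Q *ᵥ v)) (Q *ᵥ w) = Q.det * eInner (u ⨯₃ v) w := by
  simp [eInner, cross_apply, Matrix.mulVec, dotProduct, Matrix.det_fin_three,
    Fin.sum_univ_three]
  ring

lemma lagrange (u v : Fin 3 → ℝ) :
    eInner (u ⨯₃ v) (u ⨯₃ v) = eInner u u * eInner v v - eInner u v ^ 2 := by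
  simp [eInner, cross_apply, Fin.sum_univ_three]
  ring

lemma final_algebra (Q : Matrix (Fin 3) (Fin 3) ℝ) (hQ : Qᵀ * Q = 1)
    (p q r : ℝ) (hp : p ≠ 0) (a B c w1 w2 w3 : Fin 3 → ℝ)
    (h1 : Q *ᵥ w1 = p • a) (h2 : Q *ᵥ w2 = q • a + (p * p) • B)
    (h3 : Q *ᵥ w3 = r • a + (3 * p * q) • B + p ^ 3 • c) :
    eNorm (a ⨯₃ B) / eNorm a ^ 3 = eNorm (w1 ⨯₃ w2) / eNorm w1 ^ 3 ∧
    eInner (a ⨯₃ B) c / eNorm (a ⨯₃ B) ^ 2 =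
      Q.det * (eInner (w1 ⨯₃ w2) w3 / eNorm (w1 ⨯₃ w2) ^ 2) := by
  have hdet2 : Q.det * Q.det = 1 := by
    have h := congrArg Matrix.det hQ
    rwa [Matrix.det_mul, Matrix.det_transpose, Matrix.det_one] at h
  have haa : eInner w1 w1 = p ^ 2 * eInner a a := by
    rw [← innQ Q hQ w1 w1, h1]
    simp [eInner, Fin.sum_univ_three]; ring
  have hab : eInner w1 w2 = p * q * eInner a a + p ^ 3 * eInner a B := by
    rw [← innQ Q hQ w1 w2, h1, h2]
    simp [eInner, Fin.sum_univ_three]; ring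
  have hbb : eInner w2 w2 = q ^ 2 * eInner a a + 2 * q * p ^ 2 * eInner a B + p ^ 4 * eInner B B := by
    rw [← innQ Q hQ w2 w2, h2]
    simp [eInner, Fin.sum_univ_three]; ring
  have hcross : eInner (w1 ⨯₃ w2) (w1 ⨯₃ w2) = p ^ 6 * eInner (a ⨯₃ B) (a ⨯₃ B) := by
    rw [lagrange, lagrange, haa, hab, hbb]
    ring
  have htr : Q.det * eInner (w1 ⨯₃ w2) w3 = p ^ 6 * eInner (a ⨯₃ B) c := by
    rw [← tripleQ Q w1 w2 w3, h1, h2, h3]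
    simp [eInner, cross_apply, Fin.sum_univ_three]
    ring
  have htr' : eInner (w1 ⨯₃ w2) w3 = Q.det * (p ^ 6 * eInner (a ⨯₃ B) c) := by
    linear_combination Q.det * htr - eInner (w1 ⨯₃ w2) w3 * hdet2
  have habs : |p| ≠ 0 := abs_ne_zero.mpr hp
  have hNa : eNorm w1 = |p| * eNorm a := by
    rw [eNorm_eq, haa, Real.sqrt_mul (sq_nonneg p), Real.sqrt_sq_eq_abs, ← eNorm_eq]
  have hNc : eNorm (w1 ⨯₃ w2) = |p| ^ 3 * eNorm (a ⨯₃ B) := by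
    rw [eNorm_eq, hcross, show (p : ℝ) ^ 6 = (|p| ^ 3) ^ 2 by rw [← abs_pow, sq_abs]; ring,
      Real.sqrt_mul (sq_nonneg _), Real.sqrt_sq (by positivity), ← eNorm_eq]
  constructor
  · rw [hNc, hNa, mul_pow, mul_div_mul_left _ _ (pow_ne_zero 3 habs)]
  · rw [eNorm_sq, eNorm_sq, htr', hcross,
      show Q.det * (p ^ 6 * eInner (a ⨯₃ B) c) = p ^ 6 * (Q.det * eInner (a ⨯₃ B) c) by ring,
      mul_div_mul_left _ _ (pow_ne_zero 6 hp), ← mul_div_assoc, ← mul_assoc, hdet2, one_mul]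

lemma hasDerivAt_mulVec {Q : Matrix (Fin 3) (Fin 3) ℝ} {f : ℝ → Fin 3 → ℝ} {f' : Fin 3 → ℝ}
    {u : ℝ} (hf : HasDerivAt f f' u) : HasDerivAt (fun v => Q *ᵥ f v) (Q *ᵥ f') u := by
  have h := (LinearMap.toContinuousLinearMap
    (Matrix.mulVecLin Q)).hasFDerivAt.comp_hasDerivAt u hf
  exact h

/-- Let `x : ℝ → ℝ³`, `Q` an orthogonal matrix, `b ∈ ℝ³`, and `φ : ℝ → ℝ`. If `x` is
three times differentiable at `t` and at `φ(t)`, `φ` is three times differentiable at `t`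
with `φ'(t) ≠ 0`, and `Q x(u) + b = x(φ(u))` for all `u` in a neighborhood of `t`, then
`κ_x(φ(t)) = κ_x(t)` and `τ_x(φ(t)) = det(Q) · τ_x(t)`. -/
theorem curvature_torsion_of_symmetry (x : ℝ → Fin 3 → ℝ)
    (Q : Matrix (Fin 3) (Fin 3) ℝ) (hQ : Qᵀ * Q = 1) (b : Fin 3 → ℝ)
    (φ : ℝ → ℝ) (t : ℝ)
    (hxt : ThreeTimesDiffAt x t) (hxφt : ThreeTimesDiffAt x (φ t))
    (hφ : ThreeTimesDiffAt φ t) (hφ' : deriv φ t ≠ 0)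
    (heq : ∀ᶠ u in 𝓝 t, Q *ᵥ x u + b = x (φ u)) :
    curvature x (φ t) = curvature x t ∧ torsion x (φ t) = Q.det * torsion x t := by
  obtain ⟨hx1t, hx2t, hx3t⟩ := hxt
  obtain ⟨hy1, hy2, hy3⟩ := hxφt
  obtain ⟨hφ1, hφ2, hφ3⟩ := hφ
  have hφct : Tendsto φ (𝓝 t) (𝓝 (φ t)) := hφ1.self_of_nhds.continuousAt
  have hE1 : ∀ᶠ u in 𝓝 t, Q *ᵥ deriv x u = deriv φ u • deriv x (φ u) := by
    filter_upwards [heq.eventually_nhds, hx1t, hφ1, hφct.eventually hy1] with u hequ hxu hφu hxφu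
    have hd1 : HasDerivAt (fun v => Q *ᵥ x v + b) (Q *ᵥ deriv x u) u :=
      (hasDerivAt_mulVec hxu.hasDerivAt).add_const b
    have hd2 : HasDerivAt (x ∘ φ) (deriv φ u • deriv x (φ u)) u :=
      HasDerivAt.scomp u hxφu.hasDerivAt hφu.hasDerivAt
    have hd3 : HasDerivAt (fun v => Q *ᵥ x v + b) (deriv φ u • deriv x (φ u)) u :=
      hd2.congr_of_eventuallyEq (by filter_upwards [hequ] with v hv; simpa [Function.comp] using hv)
    exact hd1.unique hd3
  have hE2 : ∀ᶠ u in 𝓝 t, Q *ᵥ deriv (deriv x) u =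
      deriv (deriv φ) u • deriv x (φ u) + (deriv φ u * deriv φ u) • deriv (deriv x) (φ u) := by
    filter_upwards [hE1.eventually_nhds, hx2t, hφ1, hφ2, hφct.eventually hy1,
      hφct.eventually hy2] with u hE1u hx2u hφu hφ2u hxφu hx2φu
    have hd1 : HasDerivAt (fun v => Q *ᵥ deriv x v) (Q *ᵥ deriv (deriv x) u) u :=
      hasDerivAt_mulVec hx2u.hasDerivAt
    have hcomp : HasDerivAt (fun v => deriv x (φ v)) (deriv φ u • deriv (deriv x) (φ u)) u :=
      HasDerivAt.scomp u hx2φu.hasDerivAt hφu.hasDerivAt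
    have hd2 := hφ2u.hasDerivAt.smul hcomp
    have hd3 := hd2.congr_of_eventuallyEq (by filter_upwards [hE1u] with v hv; exact hv)
    have h := hd1.unique hd3
    rw [h]; module
  have hφ1t := hφ1.self_of_nhds
  have hA3 : Q *ᵥ deriv (deriv (deriv x)) t =
      deriv (deriv (deriv φ)) t • deriv x (φ t) +
        (3 * deriv φ t * deriv (deriv φ) t) • deriv (deriv x) (φ t) +
        deriv φ t ^ 3 • deriv (deriv (deriv x)) (φ t) := by
    have hd1 : HasDerivAt (fun v => Q *ᵥ deriv (deriv x) v) (Q *ᵥ deriv (deriv (deriv x)) t) t :=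
      hasDerivAt_mulVec hx3t.hasDerivAt
    have hc1 : HasDerivAt (fun v => deriv x (φ v)) (deriv φ t • deriv (deriv x) (φ t)) t :=
      HasDerivAt.scomp t hy2.self_of_nhds.hasDerivAt hφ1t.hasDerivAt
    have hc2 : HasDerivAt (fun v => deriv (deriv x) (φ v))
        (deriv φ t • deriv (deriv (deriv x)) (φ t)) t :=
      HasDerivAt.scomp t hy3.hasDerivAt hφ1t.hasDerivAt
    have ht1 := hφ3.hasDerivAt.smul hc1
    have hsq := (hφ2.self_of_nhds.hasDerivAt).mul (hφ2.self_of_nhds.hasDerivAt)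
    have ht2 := hsq.smul hc2
    have hd2 := ht1.add ht2
    have hd3 := hd2.congr_of_eventuallyEq (by filter_upwards [hE2] with v hv; exact hv)
    have h := hd1.unique hd3
    rw [h, Pi.mul_apply]; module
  have key := final_algebra Q hQ (deriv φ t) (deriv (deriv φ) t) (deriv (deriv (deriv φ)) t)
    hφ' (deriv x (φ t)) (deriv (deriv x) (φ t)) (deriv (deriv (deriv x)) (φ t))
    (deriv x t) (deriv (deriv x) t) (deriv (deriv (deriv x)) t)
    hE1.self_of_nhds hE2.self_of_nhds hA3
  exact ⟨key.1, key.2⟩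
end

section
/- Let x : ℝ → ℝ³ be twice differentiable, let Q ∈ ℝ^{3×3} be an orthogonal matrix, let v ∈ ℝ³, let a, b̃, c ∈ ℝ with Δ := a − b̃c ≠ 0, and let φ(t) = (a t + b̃)/(c t + 1). Suppose Q x(u) + v = x(φ(u)) for all u in some neighborhood of 0, and that x is twice differentiable at b̃ = φ(0). Then Q x'(0) = Δ · x'(b̃), Q x''(0) = Δ² · x''(b̃) − 2cΔ · x'(b̃), and Q (x'(0) × x''(0)) = det(Q) · Δ³ · (x'(b̃) × x''(b̃)). -/
open Matrix Filter Topology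

lemma cross_ortho_aux (Q : Matrix (Fin 3) (Fin 3) ℝ) (hQ : Qᵀ * Q = 1) (u w : Fin 3 → ℝ) :
    Q *ᵥ (u ⨯₃ w) = Q.det • ((Q *ᵥ u) ⨯₃ (Q *ᵥ w)) := by
  have key : Qᵀ *ᵥ ((Q *ᵥ u) ⨯₃ (Q *ᵥ w)) = Q.det • (u ⨯₃ w) := by
    funext i
    fin_cases i <;>
      simp [Matrix.mulVec, dotProduct, cross_apply, Fin.sum_univ_three,
        Matrix.det_fin_three, Matrix.transpose_apply] <;> ring
  have h2 : Q * Qᵀ = 1 := mul_eq_one_comm.mp hQ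
  have hdet : Q.det * Q.det = 1 := by
    have := congrArg Matrix.det hQ
    simpa [Matrix.det_transpose, Matrix.det_mul] using this
  have := congrArg (fun z => Q *ᵥ z) key
  simp only [Matrix.mulVec_smul, Matrix.mulVec_mulVec, h2, Matrix.one_mulVec] at this
  rw [this, smul_smul, hdet, one_smul]

/-- Let `x : ℝ → ℝ³` be twice differentiable, let `Q` be an orthogonal matrix, `v ∈ ℝ³`,
and let `φ(t) = (a t + b̃)/(c t + 1)` be a Möbius transformation with `Δ := a − b̃c ≠ 0`.
If `Q x(u) + v = x(φ(u))` for all `u` in a neighborhood of `0`, and `x` is twice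
differentiable at `b̃ = φ(0)`, then `Q x'(0) = Δ · x'(b̃)`,
`Q x''(0) = Δ² · x''(b̃) − 2cΔ · x'(b̃)`, and
`Q (x'(0) × x''(0)) = det(Q) · Δ³ · (x'(b̃) × x''(b̃))`. -/
theorem symmetry_derivative_relations (x : ℝ → Fin 3 → ℝ)
    (hx1 : ∀ u : ℝ, DifferentiableAt ℝ x u)
    (hx2 : ∀ u : ℝ, DifferentiableAt ℝ (deriv x) u)
    (Q : Matrix (Fin 3) (Fin 3) ℝ) (hQ : Qᵀ * Q = 1) (v : Fin 3 → ℝ)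
    (a bt c : ℝ) (hΔ : a - bt * c ≠ 0)
    (heq : ∀ᶠ u in 𝓝 (0 : ℝ), Q *ᵥ x u + v = x ((a * u + bt) / (c * u + 1)))
    (hxb1 : DifferentiableAt ℝ x bt) (hxb2 : DifferentiableAt ℝ (deriv x) bt) :
    Q *ᵥ deriv x 0 = (a - bt * c) • deriv x bt ∧
    Q *ᵥ deriv (deriv x) 0 =
      (a - bt * c) ^ 2 • deriv (deriv x) bt - (2 * c * (a - bt * c)) • deriv x bt ∧
    Q *ᵥ ((deriv x 0) ⨯₃ (deriv (deriv x) 0)) =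
      (Q.det * (a - bt * c) ^ 3) • ((deriv x bt) ⨯₃ (deriv (deriv x) bt)) := by
  set Δ := a - bt * c with hΔdef
  set φ : ℝ → ℝ := fun u => (a * u + bt) / (c * u + 1) with hφ
  set L : (Fin 3 → ℝ) →L[ℝ] (Fin 3 → ℝ) := LinearMap.toContinuousLinearMap (Matrix.mulVecLin Q)
    with hL
  have hLapp : ∀ z, L z = Q *ᵥ z := fun z => rfl
  have hne : ∀ᶠ u in 𝓝 (0 : ℝ), c * u + 1 ≠ 0 := by
    have hcont : Continuous fun u : ℝ => c * u + 1 := by continuity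
    have : (0:ℝ) ∈ {u : ℝ | c * u + 1 ≠ 0} := by simp
    exact (hcont.isOpen_preimage {0}ᶜ isOpen_compl_singleton).mem_nhds (by simpa using this)
  have hφ0 : φ 0 = bt := by simp [hφ]
  have hφd : ∀ u : ℝ, c * u + 1 ≠ 0 → HasDerivAt φ (Δ / (c * u + 1) ^ 2) u := by
    intro u hu
    have h1 : HasDerivAt (fun u : ℝ => a * u + bt) a u := by
      simpa using ((hasDerivAt_id u).const_mul a).add_const bt
    have h2 : HasDerivAt (fun u : ℝ => c * u + 1) c u := by
      simpa using ((hasDerivAt_id u).const_mul c).add_const 1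
    have := h1.fun_div h2 hu
    refine this.congr_deriv ?_
    rw [hΔdef]
    ring
  have hd1 : ∀ᶠ u in 𝓝 (0 : ℝ), Q *ᵥ deriv x u = (Δ / (c * u + 1) ^ 2) • deriv x (φ u) := by
    have heq2 : ∀ᶠ u in 𝓝 (0 : ℝ), ∀ᶠ w in 𝓝 u, Q *ᵥ x w + v = x (φ w) :=
      heq.eventually_nhds
    filter_upwards [heq2, hne] with u hu hcu
    have hg : HasDerivAt (fun u => Q *ᵥ x u + v) (Q *ᵥ deriv x u) u := by
      have := (L.hasFDerivAt.comp_hasDerivAt u (hx1 u).hasDerivAt).add_const v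
      simpa [hLapp] using this
    have hh : HasDerivAt (fun u => x (φ u)) ((Δ / (c * u + 1) ^ 2) • deriv x (φ u)) u :=
      (hx1 (φ u)).hasDerivAt.scomp u (hφd u hcu)
    have hder : deriv (fun u => Q *ᵥ x u + v) u = deriv (fun u => x (φ u)) u :=
      Filter.EventuallyEq.deriv_eq hu
    rw [← hg.deriv, hder, hh.deriv]
  have h1 : Q *ᵥ deriv x 0 = Δ • deriv x bt := by
    have := hd1.self_of_nhds
    simpa [hφ0] using this
  have hgl : HasDerivAt (fun u => Q *ᵥ deriv x u) (Q *ᵥ deriv (deriv x) 0) 0 := by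
    have := L.hasFDerivAt.comp_hasDerivAt 0 (hx2 0).hasDerivAt
    exact this
  have hs : HasDerivAt (fun u : ℝ => Δ / (c * u + 1) ^ 2) (-(2 * c * Δ)) 0 := by
    have h2 : HasDerivAt (fun u : ℝ => (c * u + 1) ^ 2) (2 * c) 0 := by
      have hb : HasDerivAt (fun u : ℝ => c * u + 1) c 0 := by
        simpa using ((hasDerivAt_id (0:ℝ)).const_mul c).add_const 1
      have := hb.fun_pow 2
      refine this.congr_deriv ?_
      norm_num
    have hne0 : ((c * (0:ℝ) + 1) ^ 2) ≠ 0 := by norm_num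
    have := (hasDerivAt_const (0:ℝ) Δ).fun_div h2 hne0
    refine this.congr_deriv ?_
    norm_num
    ring
  have hw : HasDerivAt (fun u : ℝ => deriv x (φ u)) (Δ • deriv (deriv x) bt) 0 := by
    have hφd0 : HasDerivAt φ Δ 0 := by
      have := hφd 0 (by norm_num)
      norm_num at this
      exact this
    have hxd : HasDerivAt (deriv x) (deriv (deriv x) bt) (φ 0) := by
      rw [hφ0]; exact hxb2.hasDerivAt
    exact hxd.scomp 0 hφd0
  have hrhs : HasDerivAt (fun u : ℝ => (Δ / (c * u + 1) ^ 2) • deriv x (φ u))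
      (Δ • Δ • deriv (deriv x) bt + -((2 * c * Δ) • deriv x bt)) 0 := by
    have := hs.smul hw
    norm_num [hφ0] at this
    exact this
  have h3 : Q *ᵥ deriv (deriv x) 0
      = Δ • Δ • deriv (deriv x) bt + -((2 * c * Δ) • deriv x bt) := by
    rw [← hgl.deriv, ← hrhs.deriv]
    exact Filter.EventuallyEq.deriv_eq hd1
  have h2 : Q *ᵥ deriv (deriv x) 0 =
      Δ ^ 2 • deriv (deriv x) bt - (2 * c * Δ) • deriv x bt := by
    rw [h3]; module
  refine ⟨h1, h2, ?_⟩
  rw [cross_ortho_aux Q hQ, h1, h2]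
  funext i
  fin_cases i <;>
    simp [cross_apply, smul_sub, smul_smul] <;> ring
end
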